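/- Let X := { h! + h : h ∈ ℕ }. Then r_k(X) = k for every positive integer k; consequently, the upper Buck density of X equals 1, and in particular X is not small. -/

import Mathlib

open Set Filter Topology

/-- An upper quasi-density on ℕ. -/
def IsUpperQuasiDensity (μ : Set ℕ → ℝ) : Prop :=
  μ Set.univ = 1 ∧
  (∀ X : Set ℕ, μ X ≤ 1) ∧
  (∀ X Y : Set ℕ, μ (X ∪ Y) ≤ μ X + μ Y) ∧
  (∀ (X : Set ℕ) (k : ℕ), 0 < k → μ ((fun x => k * x) '' X) = μ X / k) ∧
  (∀ (X : Set ℕ) (h : ℕ), μ ((fun x => x + h) '' X) = μ X)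

/-- An upper density on ℕ: a monotone upper quasi-density. -/
def IsUpperDensity (μ : Set ℕ → ℝ) : Prop :=
  IsUpperQuasiDensity μ ∧ ∀ X Y : Set ℕ, X ⊆ Y → μ X ≤ μ Y

/-- A set of naturals is small if every upper quasi-density vanishes on it. -/
def SmallSet (X : Set ℕ) : Prop :=
  ∀ μ : Set ℕ → ℝ, IsUpperQuasiDensity μ → μ X = 0

/-- The upper asymptotic density of a set of naturals. -/
noncomputable def upperAsymptoticDensity (X : Set ℕ) : ℝ :=
  limsup (fun n : ℕ => ((X ∩ Set.Icc 1 n).ncard : ℝ) / n) atTop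

/-- The arithmetic progression k·ℕ + h. -/
def AP (k h : ℕ) : Set ℕ := {x : ℕ | ∃ m : ℕ, x = k * m + h}

/-- A finite union of arithmetic progressions of ℕ. -/
def IsFinUnionAP (A : Set ℕ) : Prop :=
  ∃ s : Finset (ℕ × ℕ), (∀ p ∈ s, 0 < p.1) ∧ A = ⋃ p ∈ s, AP p.1 p.2

/-- The upper Buck density of a set of naturals. -/
noncomputable def buckDensity (X : Set ℕ) : ℝ :=
  sInf {d : ℝ | ∃ A : Set ℕ, IsFinUnionAP A ∧ X ⊆ A ∧ d = upperAsymptoticDensity A}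

/-- `rk k X` is the number of residues h ∈ [0, k-1] with X ∩ (k·ℕ + h) ≠ ∅. -/
noncomputable def rk (k : ℕ) (X : Set ℕ) : ℕ :=
  {h : ℕ | h < k ∧ (X ∩ AP k h).Nonempty}.ncard

/-- `wk μ k S` is the number of residues h ∈ [0, k-1] with μ(S ∩ (k·ℕ + h)) ≠ 0. -/
noncomputable def wk (μ : Set ℕ → ℝ) (k : ℕ) (S : Set ℕ) : ℕ :=
  {h : ℕ | h < k ∧ μ (S ∩ AP k h) ≠ 0}.ncard

lemma rk_eq {k : ℕ} (hk : 0 < k) (S : Set ℕ) :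
    rk k S = ((fun x => x % k) '' S).ncard := by
  unfold rk
  congr 1
  ext h
  simp only [Set.mem_setOf_eq, Set.mem_image]
  constructor
  · rintro ⟨hlt, x, hxS, m, rfl⟩
    exact ⟨k * m + h, hxS, by simp [Nat.mul_add_mod, Nat.mod_eq_of_lt hlt]⟩
  · rintro ⟨x, hxS, rfl⟩
    exact ⟨Nat.mod_lt _ hk, x, hxS, x / k, by rw [Nat.div_add_mod]⟩

lemma img_subset {k : ℕ} (hk : 0 < k) (S : Set ℕ) :
    (fun x => x % k) '' S ⊆ Set.Iio k := by
  rintro _ ⟨x, _, rfl⟩; exact Nat.mod_lt _ hk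

lemma img_finite {k : ℕ} (hk : 0 < k) (S : Set ℕ) :
    ((fun x => x % k) '' S).Finite :=
  (Set.finite_Iio k).subset (img_subset hk S)

lemma ncard_Iio (k : ℕ) : (Set.Iio k).ncard = k := by
  rw [Set.ncard_eq_toFinset_card']
  simp

lemma rk_le {k : ℕ} (hk : 0 < k) (S : Set ℕ) : rk k S ≤ k := by
  rw [rk_eq hk]
  calc ((fun x => x % k) '' S).ncard ≤ (Set.Iio k).ncard :=
        Set.ncard_le_ncard (img_subset hk S) (Set.finite_Iio k)
    _ = k := ncard_Iio k

lemma rk_univ {k : ℕ} (hk : 0 < k) : rk k Set.univ = k := by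
  rw [rk_eq hk]
  have : (fun x => x % k) '' Set.univ = Set.Iio k := by
    apply Set.Subset.antisymm (img_subset hk _)
    intro h hh
    exact ⟨h, trivial, Nat.mod_eq_of_lt hh⟩
  rw [this, ncard_Iio]

lemma rk_union {k : ℕ} (hk : 0 < k) (X Y : Set ℕ) :
    rk k (X ∪ Y) ≤ rk k X + rk k Y := by
  rw [rk_eq hk, rk_eq hk, rk_eq hk, Set.image_union]
  exact Set.ncard_union_le _ _

lemma rk_translate {k : ℕ} (hk : 0 < k) (S : Set ℕ) (t : ℕ) :
    rk k ((fun x => x + t) '' S) = rk k S := by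
  rw [rk_eq hk, rk_eq hk, ← Set.image_comp]
  have h1 : ((fun x => x % k) ∘ fun x => x + t) = (fun h => (h + t) % k) ∘ (fun x => x % k) := by
    funext x; simp [Function.comp, Nat.mod_add_mod]
  rw [h1, Set.image_comp]
  apply Set.ncard_image_of_injOn
  rintro _ ⟨x, _, rfl⟩ _ ⟨y, _, rfl⟩ hxy
  have : (x % k + t) % k = (y % k + t) % k := hxy
  have h2 : x % k ≡ y % k [MOD k] := Nat.ModEq.add_right_cancel' t this
  simpa [Nat.ModEq, Nat.mod_mod_of_dvd] using h2

lemma rk_smul {c K : ℕ} (hc : 0 < c) (hK : 0 < K) (S : Set ℕ) :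
    rk (c * K) ((fun x => c * x) '' S) = rk K S := by
  rw [rk_eq (Nat.mul_pos hc hK), rk_eq hK, ← Set.image_comp]
  have h1 : ((fun x => x % (c * K)) ∘ fun x => c * x) = (fun h => c * h) ∘ (fun x => x % K) := by
    funext x; simp [Function.comp, Nat.mul_mod_mul_left]
  rw [h1, Set.image_comp]
  exact Set.ncard_image_of_injective _ (mul_right_injective₀ hc.ne')

lemma rk_dvd_le {k K : ℕ} (hk : 0 < k) (hK : 0 < K) (hdvd : k ∣ K) (S : Set ℕ) :
    rk K S * k ≤ rk k S * K := by
  rw [rk_eq hk, rk_eq hK]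
  set T : Finset ℕ := (img_finite hK S).toFinset with hT
  have hTcard : ((fun x => x % K) '' S).ncard = T.card :=
    Set.ncard_eq_toFinset_card _ (img_finite hK S)
  have himg : (fun x => x % k) '' S = (fun x => x % k) '' ((fun x => x % K) '' S) := by
    rw [← Set.image_comp]
    exact (Set.image_congr' (fun x => (Nat.mod_mod_of_dvd x hdvd : x % K % k = x % k)) (s := S)).symm
  have hfin2 : ((fun x => x % k) '' ((fun x => x % K) '' S)).Finite :=
    (img_finite hK S).image _
  have himgcard : ((fun x => x % k) '' S).ncard = (T.image (fun x => x % k)).card := by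
    rw [himg, Set.ncard_eq_toFinset_card _ hfin2]
    congr 1
    ext a
    simp [hT]
  rw [hTcard, himgcard]
  have key : T.card ≤ (K / k) * (T.image (fun x => x % k)).card := by
    apply Finset.card_le_mul_card_image
    intro a _
    have hmaps : ∀ x ∈ T.filter (fun x => x % k = a), x / k ∈ Finset.range (K / k) := by
      intro x hx
      simp only [Finset.mem_filter] at hx
      have hxK : x < K := by
        have := hx.1
        rw [hT, Set.Finite.mem_toFinset] at this
        exact img_subset hK S this
      exact Finset.mem_range.mpr (Nat.div_lt_div_of_lt_of_dvd hdvd hxK)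
    have hinj : Set.InjOn (fun x => x / k) (T.filter (fun x => x % k = a)) := by
      intro x hx y hy hxy
      simp only [Finset.coe_filter, Set.mem_setOf_eq] at hx hy
      have : k * (x / k) + x % k = k * (y / k) + y % k := by
        simp only at hxy
        rw [hxy, hx.2, hy.2]
      simpa [Nat.div_add_mod] using this
    simpa using Finset.card_le_card_of_injOn (fun x => x / k) hmaps hinj
  have hKk : K / k * k = K := Nat.div_mul_cancel hdvd
  calc T.card * k ≤ K / k * (T.image (fun x => x % k)).card * k :=
        Nat.mul_le_mul_right _ key
    _ = (T.image (fun x => x % k)).card * (K / k * k) := by ring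
    _ = (T.image (fun x => x % k)).card * K := by rw [hKk]

lemma rk_div_le {k K : ℕ} (hk : 0 < k) (hK : 0 < K) (hdvd : k ∣ K) (S : Set ℕ) :
    (rk K S : ℝ) / K ≤ (rk k S : ℝ) / k := by
  rw [div_le_div_iff₀ (by exact_mod_cast hK) (by exact_mod_cast hk)]
  exact_mod_cast rk_dvd_le hk hK hdvd S

lemma rk_X {k : ℕ} (hk : 0 < k) :
    rk k {x : ℕ | ∃ h : ℕ, x = Nat.factorial h + h} = k := by
  rw [rk_eq hk]
  have : (fun x => x % k) '' {x : ℕ | ∃ h : ℕ, x = Nat.factorial h + h} = Set.Iio k := by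
    apply Set.Subset.antisymm (img_subset hk _)
    intro r hr
    obtain ⟨m, hm⟩ := Nat.dvd_factorial hk (Nat.le_add_left k r)
    refine ⟨Nat.factorial (r + k) + (r + k), ⟨r + k, rfl⟩, ?_⟩
    show (Nat.factorial (r + k) + (r + k)) % k = r
    rw [hm]
    have : k * m + (r + k) = k * (m + 1) + r := by ring
    rw [this, Nat.mul_add_mod, Nat.mod_eq_of_lt hr]
  rw [this, ncard_Iio]

noncomputable def bfun (S : Set ℕ) (n : ℕ) : ℝ :=
  (rk (Nat.factorial n) S : ℝ) / (Nat.factorial n)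

noncomputable def mu (S : Set ℕ) : ℝ := ⨅ n : ℕ, bfun S n

lemma bfun_nonneg (S : Set ℕ) (n : ℕ) : 0 ≤ bfun S n := by
  unfold bfun; positivity

lemma bfun_antitone (S : Set ℕ) : Antitone (bfun S) := by
  apply antitone_nat_of_succ_le
  intro n
  exact rk_div_le (Nat.factorial_pos n) (Nat.factorial_pos (n + 1))
    (Nat.factorial_dvd_factorial (Nat.le_succ n)) S

lemma bfun_bdd (S : Set ℕ) : BddBelow (Set.range (bfun S)) :=
  ⟨0, by rintro _ ⟨n, rfl⟩; exact bfun_nonneg S n⟩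

lemma mu_tendsto (S : Set ℕ) : Tendsto (bfun S) atTop (𝓝 (mu S)) :=
  tendsto_atTop_ciInf (bfun_antitone S) (bfun_bdd S)

lemma mu_le_bfun (S : Set ℕ) (n : ℕ) : mu S ≤ bfun S n :=
  ciInf_le (bfun_bdd S) n

lemma mu_univ : mu Set.univ = 1 := by
  have h : ∀ n, bfun Set.univ n = 1 := by
    intro n
    unfold bfun
    rw [rk_univ (Nat.factorial_pos n)]
    exact div_self (by exact_mod_cast (Nat.factorial_pos n).ne')
  unfold mu
  simp [h]

lemma mu_le_one (S : Set ℕ) : mu S ≤ 1 := by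
  refine (mu_le_bfun S 0).trans ?_
  unfold bfun
  simp only [Nat.factorial_zero, Nat.cast_one, div_one]
  have : rk 1 S ≤ 1 := rk_le Nat.one_pos S
  exact_mod_cast this

lemma mu_union (X Y : Set ℕ) : mu (X ∪ Y) ≤ mu X + mu Y := by
  refine le_of_tendsto_of_tendsto' (mu_tendsto (X ∪ Y)) ((mu_tendsto X).add (mu_tendsto Y)) ?_
  intro n
  unfold bfun
  rw [← add_div]
  apply div_le_div_of_nonneg_right ?_ (by positivity)
  · exact_mod_cast rk_union (Nat.factorial_pos n) X Y

lemma mu_translate (S : Set ℕ) (t : ℕ) : mu ((fun x => x + t) '' S) = mu S := by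
  unfold mu
  congr 1
  funext n
  unfold bfun
  rw [rk_translate (Nat.factorial_pos n)]

lemma factorial_sub_dvd {c n : ℕ} (hc : 0 < c) (hn : c ≤ n) :
    Nat.factorial (n - c) ∣ Nat.factorial n / c := by
  have h1 : Nat.choose n c * Nat.factorial c * Nat.factorial (n - c) = Nat.factorial n :=
    Nat.choose_mul_factorial_mul_factorial hn
  have h2 : Nat.factorial c = c * Nat.factorial (c - 1) := (Nat.mul_factorial_pred hc.ne').symm
  have h3 : Nat.factorial n = c * (Nat.choose n c * Nat.factorial (c - 1) * Nat.factorial (n - c)) := by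
    rw [← h1, h2]; ring
  have h4 : Nat.factorial n / c = Nat.choose n c * Nat.factorial (c - 1) * Nat.factorial (n - c) := by
    rw [h3, Nat.mul_div_cancel_left _ hc]
  rw [h4]
  exact Dvd.intro_left _ rfl

lemma mu_smul (S : Set ℕ) (c : ℕ) (hc : 0 < c) :
    mu ((fun x => c * x) '' S) = mu S / c := by
  set cS := (fun x => c * x) '' S with hcS
  have hcR : (0 : ℝ) < c := by exact_mod_cast hc
  have hlow : Tendsto (fun n => bfun S n / (c : ℝ)) atTop (𝓝 (mu S / c)) :=
    (mu_tendsto S).div_const c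
  have hup : Tendsto (fun n => bfun S (n - c) / (c : ℝ)) atTop (𝓝 (mu S / c)) :=
    (((mu_tendsto S).comp (tendsto_sub_atTop_nat c))).div_const c
  have key : ∀ n : ℕ, c ≤ n →
      bfun S n / (c : ℝ) ≤ bfun cS n ∧ bfun cS n ≤ bfun S (n - c) / (c : ℝ) := by
    intro n hn
    have hcd : c ∣ Nat.factorial n := Nat.dvd_factorial hc hn
    set K := Nat.factorial n / c with hKdef
    have hfac : Nat.factorial n = c * K := (Nat.mul_div_cancel' hcd).symm
    have hKpos : 0 < K := Nat.div_pos (Nat.le_of_dvd (Nat.factorial_pos n) hcd) hc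
    have hKR : (0 : ℝ) < K := by exact_mod_cast hKpos
    have hrk : rk (Nat.factorial n) cS = rk K S := by
      rw [hcS, hfac]; exact rk_smul hc hKpos S
    have hbcS : bfun cS n = ((rk K S : ℝ) / K) / c := by
      unfold bfun
      rw [hrk, hfac, div_div]
      push_cast
      ring_nf
    constructor
    · rw [hbcS]
      apply div_le_div_of_nonneg_right ?_ hcR.le
      exact rk_div_le hKpos (Nat.factorial_pos n) (Dvd.intro_left c hfac.symm) S
    · rw [hbcS]
      apply div_le_div_of_nonneg_right ?_ hcR.le
      exact rk_div_le (Nat.factorial_pos (n - c)) hKpos (factorial_sub_dvd hc hn) S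
  have hsq : Tendsto (bfun cS) atTop (𝓝 (mu S / c)) := by
    apply tendsto_of_tendsto_of_tendsto_of_le_of_le' hlow hup
    · filter_upwards [eventually_ge_atTop c] with n hn using (key n hn).1
    · filter_upwards [eventually_ge_atTop c] with n hn using (key n hn).2
  exact tendsto_nhds_unique (mu_tendsto cS) hsq

lemma mu_X : mu {x : ℕ | ∃ h : ℕ, x = Nat.factorial h + h} = 1 := by
  have h : ∀ n, bfun {x : ℕ | ∃ h : ℕ, x = Nat.factorial h + h} n = 1 := by
    intro n
    unfold bfun
    rw [rk_X (Nat.factorial_pos n)]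
    exact div_self (by exact_mod_cast (Nat.factorial_pos n).ne')
  unfold mu
  simp [h]

lemma density_fn_nonneg (A : Set ℕ) (n : ℕ) : 0 ≤ ((A ∩ Set.Icc 1 n).ncard : ℝ) / n := by
  positivity

lemma density_fn_le_one (A : Set ℕ) (n : ℕ) : ((A ∩ Set.Icc 1 n).ncard : ℝ) / n ≤ 1 := by
  rcases Nat.eq_zero_or_pos n with rfl | hn
  · simp
  · rw [div_le_one (by exact_mod_cast hn)]
    have h1 : (A ∩ Set.Icc 1 n).ncard ≤ (Set.Icc 1 n).ncard :=
      Set.ncard_le_ncard Set.inter_subset_right (Set.finite_Icc 1 n)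
    have h2 : (Set.Icc 1 n).ncard = n := by
      rw [Set.ncard_eq_toFinset_card _ (Set.finite_Icc 1 n)]
      simp
    exact_mod_cast h2 ▸ h1

lemma dstar_le_one (A : Set ℕ) : upperAsymptoticDensity A ≤ 1 := by
  apply Filter.limsup_le_of_le
  · exact Filter.isCoboundedUnder_le_of_le atTop (density_fn_nonneg A)
  · exact Filter.Eventually.of_forall (density_fn_le_one A)

lemma dstar_ge_of_Ici_subset {A : Set ℕ} {N : ℕ} (h : Set.Ici N ⊆ A) :
    1 ≤ upperAsymptoticDensity A := by
  set M := max N 1 with hM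
  have hg : Tendsto (fun n : ℕ => 1 - (M : ℝ) / n) atTop (𝓝 1) := by
    have : Tendsto (fun n : ℕ => (M : ℝ) / n) atTop (𝓝 0) :=
      tendsto_const_div_atTop_nhds_zero_nat (M : ℝ)
    simpa using (tendsto_const_nhds (x := (1:ℝ))).sub this
  have hle : ∀ᶠ n in atTop, (1 : ℝ) - (M : ℝ) / n ≤ ((A ∩ Set.Icc 1 n).ncard : ℝ) / n := by
    filter_upwards [eventually_ge_atTop M] with n hn
    have hsub : Set.Icc M n ⊆ A ∩ Set.Icc 1 n := by
      intro x hx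
      refine ⟨h (le_trans (le_max_left N 1) hx.1), le_trans (le_max_right N 1) hx.1, hx.2⟩
    have hcard : n + 1 - M ≤ (A ∩ Set.Icc 1 n).ncard := by
      have h1 : (Set.Icc M n).ncard = n + 1 - M := by
        rw [Set.ncard_eq_toFinset_card _ (Set.finite_Icc M n)]
        simp [Nat.card_Icc]
      calc n + 1 - M = (Set.Icc M n).ncard := h1.symm
        _ ≤ _ := Set.ncard_le_ncard hsub ((Set.finite_Icc 1 n).subset Set.inter_subset_right)
    have hnpos : (0 : ℝ) < n := by
      have : 1 ≤ n := le_trans (le_max_right N 1) hn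
      exact_mod_cast this
    have hbig : (n : ℝ) - M ≤ ((A ∩ Set.Icc 1 n).ncard : ℝ) := by
      have h3 : ((n + 1 - M : ℕ) : ℝ) ≤ ((A ∩ Set.Icc 1 n).ncard : ℝ) := by exact_mod_cast hcard
      have h2 : (n : ℝ) - M ≤ ((n + 1 - M : ℕ) : ℝ) := by
        have hMn : M ≤ n + 1 := le_trans hn (Nat.le_succ n)
        push_cast [hMn]
        linarith
      linarith
    calc (1 : ℝ) - (M : ℝ) / n = ((n : ℝ) - M) / n := by field_simp
      _ ≤ ((A ∩ Set.Icc 1 n).ncard : ℝ) / n := by gcongr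
  calc (1 : ℝ) = limsup (fun n : ℕ => 1 - (M : ℝ) / n) atTop := (hg.limsup_eq).symm
    _ ≤ upperAsymptoticDensity A := by
        exact Filter.limsup_le_limsup hle (hg.isBoundedUnder_ge.isCoboundedUnder_le)
          (Filter.isBoundedUnder_of ⟨1, density_fn_le_one A⟩)

lemma dstar_univ : upperAsymptoticDensity Set.univ = 1 :=
  le_antisymm (dstar_le_one _) (dstar_ge_of_Ici_subset (N := 0) (Set.subset_univ _))

lemma univ_finUnionAP : IsFinUnionAP Set.univ := by
  refine ⟨{(1, 0)}, by intro p hp; simp at hp; simp [hp], ?_⟩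
  ext x
  simp [AP]

lemma buck_X : buckDensity {x : ℕ | ∃ h : ℕ, x = Nat.factorial h + h} = 1 := by
  set X := {x : ℕ | ∃ h : ℕ, x = Nat.factorial h + h} with hX
  set D := {d : ℝ | ∃ A : Set ℕ, IsFinUnionAP A ∧ X ⊆ A ∧ d = upperAsymptoticDensity A} with hD
  have hmem : (1 : ℝ) ∈ D := ⟨Set.univ, univ_finUnionAP, Set.subset_univ X, dstar_univ.symm⟩
  have hlb : ∀ d ∈ D, (1 : ℝ) ≤ d := by
    rintro d ⟨A, ⟨s, hspos, rfl⟩, hXA, rfl⟩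
    set L := ∏ p ∈ s, p.1 with hL
    have hLpos : 0 < L := Finset.prod_pos hspos
    set xr : ℕ → ℕ := fun r => Nat.factorial (r + L) + (r + L) with hxr
    have hxmod : ∀ r < L, xr r % L = r := by
      intro r hr
      obtain ⟨m, hm⟩ := Nat.dvd_factorial hLpos (Nat.le_add_left L r)
      show (Nat.factorial (r + L) + (r + L)) % L = r
      rw [hm]
      have : L * m + (r + L) = L * (m + 1) + r := by ring
      rw [this, Nat.mul_add_mod, Nat.mod_eq_of_lt hr]
    have htail : ∀ r < L, ∀ y, xr r ≤ y → y % L = r → y ∈ ⋃ p ∈ s, AP p.1 p.2 := by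
      intro r hr y hle hymod
      have hxA : xr r ∈ ⋃ p ∈ s, AP p.1 p.2 := hXA ⟨r + L, rfl⟩
      rw [Set.mem_iUnion₂] at hxA
      obtain ⟨p, hps, m, hxm⟩ := hxA
      have hdvdL : p.1 ∣ L := Finset.dvd_prod_of_mem _ hps
      obtain ⟨u, hu⟩ := hdvdL
      have hmodeq : xr r ≡ y [MOD L] := by
        unfold Nat.ModEq
        rw [hymod, hxmod r hr]
      obtain ⟨j, hj⟩ := (Nat.modEq_iff_dvd' hle).mp hmodeq
      have hy : y = xr r + L * j := by omega
      refine Set.mem_biUnion hps ⟨m + u * j, ?_⟩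
      rw [hy, hxm, hu]
      ring
    set N := (Finset.range L).sup xr with hN
    have hIci : Set.Ici N ⊆ ⋃ p ∈ s, AP p.1 p.2 := by
      intro y hy
      have hr : y % L < L := Nat.mod_lt _ hLpos
      refine htail (y % L) hr y ?_ rfl
      exact le_trans (Finset.le_sup (Finset.mem_range.mpr hr)) hy
    exact dstar_ge_of_Ici_subset hIci
  exact le_antisymm (csInf_le ⟨1, hlb⟩ hmem) (le_csInf ⟨1, hmem⟩ hlb)

/-- For X = {h! + h : h ∈ ℕ}, one has r_k(X) = k for every positive k; hence
the upper Buck density of X is 1 and in particular X is not small. -/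
theorem factorial_add_self_buckDensity_one :
    (∀ k : ℕ, 0 < k → rk k {x : ℕ | ∃ h : ℕ, x = Nat.factorial h + h} = k) ∧
    buckDensity {x : ℕ | ∃ h : ℕ, x = Nat.factorial h + h} = 1 ∧
    ¬ SmallSet {x : ℕ | ∃ h : ℕ, x = Nat.factorial h + h} := by
  refine ⟨fun k hk => rk_X hk, buck_X, ?_⟩
  intro hs
  have h0 := hs mu ⟨mu_univ, mu_le_one, mu_union, fun S k hk => mu_smul S k hk,
    fun S t => mu_translate S t⟩
  rw [mu_X] at h0
  norm_num at h0
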